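/- Let a, b be real numbers with −1 < a < b, and define the tangent lines of log(1+·) at a and b by h_a(x) := (x − a)/(1 + a) + log(1 + a) and h_b(x) := (x − b)/(1 + b) + log(1 + b). Then for every x ∈ [a, b], 0 ≤ min(h_a(x), h_b(x)) − log(1 + x) ≤ e(a, b), and the supremum over x ∈ [a, b] of min(h_a(x), h_b(x)) − log(1 + x) equals e(a, b), attained at the intersection point of the two tangent lines. -/

import Mathlib

/-- The hyperplane-approximation error between tangency points `a < x` (with `a > −1`). -/
noncomputable def hyperErr (a x : ℝ) : ℝ :=
  ((1 + x) / (x - a)) * Real.log ((1 + x) / (1 + a))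
    - Real.log (((1 + x) / (x - a)) * Real.log ((1 + x) / (1 + a))) - 1

private lemma phi_mono (t c : ℝ) (ht : 1 ≤ t) (htc : t ≤ c) :
    t - 1 - Real.log t ≤ c - 1 - Real.log c := by
  have ht0 : (0:ℝ) < t := by linarith
  have hc0 : (0:ℝ) < c := by linarith
  have h1 : Real.log (c / t) ≤ c / t - 1 :=
    Real.log_le_sub_one_of_pos (by positivity)
  have h2 : Real.log (c / t) = Real.log c - Real.log t :=
    Real.log_div hc0.ne' ht0.ne'
  have h3 : c / t ≤ 1 + c - t := by
    rw [div_le_iff₀ ht0]; nlinarith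
  linarith

private lemma phi_anti (s t : ℝ) (hs : 0 < s) (hst : s ≤ t) (ht : t ≤ 1) :
    t - 1 - Real.log t ≤ s - 1 - Real.log s := by
  have ht0 : (0:ℝ) < t := lt_of_lt_of_le hs hst
  have h1 : Real.log (s / t) ≤ s / t - 1 :=
    Real.log_le_sub_one_of_pos (by positivity)
  have h2 : Real.log (s / t) = Real.log s - Real.log t :=
    Real.log_div hs.ne' ht0.ne'
  have h3 : s / t ≤ 1 + s - t := by
    rw [div_le_iff₀ ht0]; nlinarith
  linarith

/-- On `[a, b]`, the pointwise minimum of the two tangent lines of `log(1+·)` at `a`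
and `b` over-approximates `log(1+x)` with gap at most `e(a,b)`, and the supremum of
the gap equals `e(a,b)`, attained at the intersection point of the two tangents. -/
theorem tangent_min_gap
    (a b : ℝ) (ha : -1 < a) (hab : a < b) :
    (∀ x ∈ Set.Icc a b,
        0 ≤ min ((x - a) / (1 + a) + Real.log (1 + a))
              ((x - b) / (1 + b) + Real.log (1 + b)) - Real.log (1 + x)
      ∧ min ((x - a) / (1 + a) + Real.log (1 + a))
              ((x - b) / (1 + b) + Real.log (1 + b)) - Real.log (1 + x)
          ≤ hyperErr a b)
    ∧ sSup ((fun x : ℝ =>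
          min ((x - a) / (1 + a) + Real.log (1 + a))
              ((x - b) / (1 + b) + Real.log (1 + b)) - Real.log (1 + x)) ''
            Set.Icc a b) = hyperErr a b
    ∧ ∃ x' ∈ Set.Icc a b,
        (x' - a) / (1 + a) + Real.log (1 + a)
            = (x' - b) / (1 + b) + Real.log (1 + b)
        ∧ min ((x' - a) / (1 + a) + Real.log (1 + a))
              ((x' - b) / (1 + b) + Real.log (1 + b)) - Real.log (1 + x')
            = hyperErr a b := by
  have hA : (0:ℝ) < 1 + a := by linarith
  have hB : (0:ℝ) < 1 + b := by linarith
  have hba : (0:ℝ) < b - a := by linarith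
  set L := Real.log ((1 + b) / (1 + a)) with hLdef
  have hL : 0 < L := Real.log_pos (by rw [lt_div_iff₀ hA]; linarith)
  set c := (1 + b) / (b - a) * L with hcdef
  have hc0 : 0 < c := by positivity
  have hkey : c * (b - a) = (1 + b) * L := by
    rw [hcdef]; field_simp
  clear_value L c
  have hlogdiff : Real.log (1 + b) - Real.log (1 + a) = L := by
    rw [hLdef, Real.log_div hB.ne' hA.ne']
  -- L bounds
  have hLlow : b - a ≤ L * (1 + b) := by
    have h1 : Real.log ((1 + a) / (1 + b)) ≤ (1 + a) / (1 + b) - 1 :=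
      Real.log_le_sub_one_of_pos (by positivity)
    have h2 : Real.log ((1 + a) / (1 + b)) = Real.log (1 + a) - Real.log (1 + b) :=
      Real.log_div hA.ne' hB.ne'
    have h3 : (1 + a) / (1 + b) - 1 = -((b - a) / (1 + b)) := by field_simp; ring
    have h4 : (b - a) / (1 + b) ≤ L := by
      have : -L ≤ -((b - a) / (1 + b)) := by linarith
      linarith
    rw [div_le_iff₀ hB] at h4
    linarith
  have hLhigh : L * (1 + a) ≤ b - a := by
    have h1 : Real.log ((1 + b) / (1 + a)) ≤ (1 + b) / (1 + a) - 1 :=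
      Real.log_le_sub_one_of_pos (by positivity)
    have h3 : (1 + b) / (1 + a) - 1 = (b - a) / (1 + a) := by field_simp; ring
    have h4 : L ≤ (b - a) / (1 + a) := by rw [hLdef]; linarith
    rw [le_div_iff₀ hA] at h4
    linarith
  have hc1 : 1 ≤ c := by nlinarith [hkey]
  have hcB : c * (1 + a) ≤ 1 + b := by
    nlinarith [hkey, mul_le_mul_of_nonneg_left hLhigh hB.le]
  have hErr : hyperErr a b = c - Real.log c - 1 := by
    rw [hyperErr, ← hLdef, ← hcdef]
  have h3 : (1 + a) * c / (1 + b) = c - L := by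
    rw [div_eq_iff hB.ne']
    nlinarith [hkey]
  -- the difference of the two tangent lines
  have hdiff : ∀ x : ℝ, ((x - a) / (1 + a) + Real.log (1 + a))
      - ((x - b) / (1 + b) + Real.log (1 + b))
      = ((1 + x) - (1 + a) * c) * ((b - a) / ((1 + a) * (1 + b))) := by
    intro x
    have e1 : (x - a) / (1 + a) - (x - b) / (1 + b)
        = (1 + x) * (b - a) / ((1 + a) * (1 + b)) := by
      field_simp; ring
    have e2 : (1 + a) * c * (b - a) / ((1 + a) * (1 + b)) = L := by
      rw [div_eq_iff (by positivity)]
      nlinarith [hkey]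
    have e3 : ((1 + x) - (1 + a) * c) * ((b - a) / ((1 + a) * (1 + b)))
        = (1 + x) * (b - a) / ((1 + a) * (1 + b))
          - (1 + a) * c * (b - a) / ((1 + a) * (1 + b)) := by ring
    linarith [e1, e2, e3, hlogdiff]
  have hq : (0:ℝ) < (b - a) / ((1 + a) * (1 + b)) := by positivity
  -- pointwise claims
  have hpt : ∀ x ∈ Set.Icc a b,
      0 ≤ min ((x - a) / (1 + a) + Real.log (1 + a))
            ((x - b) / (1 + b) + Real.log (1 + b)) - Real.log (1 + x)
    ∧ min ((x - a) / (1 + a) + Real.log (1 + a))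
            ((x - b) / (1 + b) + Real.log (1 + b)) - Real.log (1 + x)
        ≤ hyperErr a b := by
    rintro x ⟨hax, hxb⟩
    have hx : (0:ℝ) < 1 + x := by linarith
    have hga : Real.log (1 + x) ≤ (x - a) / (1 + a) + Real.log (1 + a) := by
      have h1 : Real.log ((1 + x) / (1 + a)) ≤ (1 + x) / (1 + a) - 1 :=
        Real.log_le_sub_one_of_pos (by positivity)
      have h2 : Real.log ((1 + x) / (1 + a)) = Real.log (1 + x) - Real.log (1 + a) :=
        Real.log_div hx.ne' hA.ne'
      have h4 : (1 + x) / (1 + a) - 1 = (x - a) / (1 + a) := by field_simp; ring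
      linarith
    have hgb : Real.log (1 + x) ≤ (x - b) / (1 + b) + Real.log (1 + b) := by
      have h1 : Real.log ((1 + x) / (1 + b)) ≤ (1 + x) / (1 + b) - 1 :=
        Real.log_le_sub_one_of_pos (by positivity)
      have h2 : Real.log ((1 + x) / (1 + b)) = Real.log (1 + x) - Real.log (1 + b) :=
        Real.log_div hx.ne' hB.ne'
      have h4 : (1 + x) / (1 + b) - 1 = (x - b) / (1 + b) := by field_simp; ring
      linarith
    constructor
    · have hmin := le_min hga hgb
      linarith
    · rcases le_total ((x - a) / (1 + a) + Real.log (1 + a))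
        ((x - b) / (1 + b) + Real.log (1 + b)) with h | h
      · -- min is the tangent at a ; here x ≤ x'
        rw [min_eq_left h, hErr]
        have h6 : ((1 + x) - (1 + a) * c) * ((b - a) / ((1 + a) * (1 + b))) ≤ 0 := by
          rw [← hdiff x]; linarith
        have hd : 1 + x ≤ (1 + a) * c := by
          by_contra hcon
          push_neg at hcon
          have := mul_pos (sub_pos.mpr hcon) hq
          linarith
        have ht1 : 1 ≤ (1 + x) / (1 + a) := by rw [le_div_iff₀ hA]; linarith
        have htc : (1 + x) / (1 + a) ≤ c := by
          rw [div_le_iff₀ hA]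
          calc 1 + x ≤ (1 + a) * c := hd
            _ = c * (1 + a) := by ring
        have hmono := phi_mono ((1 + x) / (1 + a)) c ht1 htc
        have e4 : Real.log ((1 + x) / (1 + a)) = Real.log (1 + x) - Real.log (1 + a) :=
          Real.log_div hx.ne' hA.ne'
        have e5 : (1 + x) / (1 + a) - 1 = (x - a) / (1 + a) := by field_simp; ring
        linarith
      · -- min is the tangent at b ; here x ≥ x'
        rw [min_eq_right h, hErr]
        have h6 : 0 ≤ ((1 + x) - (1 + a) * c) * ((b - a) / ((1 + a) * (1 + b))) := by
          rw [← hdiff x]; linarith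
        have hd : (1 + a) * c ≤ 1 + x := by
          by_contra hcon
          push_neg at hcon
          have := mul_neg_of_neg_of_pos (sub_neg.mpr hcon) hq
          linarith
        have hs0 : 0 < (1 + a) * c / (1 + b) := by positivity
        have hst : (1 + a) * c / (1 + b) ≤ (1 + x) / (1 + b) := by gcongr
        have ht1' : (1 + x) / (1 + b) ≤ 1 := by rw [div_le_one hB]; linarith
        have hanti := phi_anti ((1 + a) * c / (1 + b)) ((1 + x) / (1 + b)) hs0 hst ht1'
        have hlogs : Real.log ((1 + a) * c / (1 + b)) = Real.log c - L := by
          rw [Real.log_div (by positivity) hB.ne', Real.log_mul hA.ne' hc0.ne']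
          linarith
        have e6 : (1 + x) / (1 + b) - 1 = (x - b) / (1 + b) := by field_simp; ring
        have e7 : Real.log ((1 + x) / (1 + b)) = Real.log (1 + x) - Real.log (1 + b) :=
          Real.log_div hx.ne' hB.ne'
        linarith
  -- the intersection point
  set x' : ℝ := (1 + a) * c - 1 with hx'def
  clear_value x'
  have hx'1 : 1 + x' = (1 + a) * c := by rw [hx'def]; ring
  have hx'a : a ≤ x' := by
    have h7 : (1 + a) * 1 ≤ (1 + a) * c := mul_le_mul_of_nonneg_left hc1 hA.le
    linarith [hx'1, h7]
  have hx'b : x' ≤ b := by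
    have h7 : (1 + a) * c = c * (1 + a) := by ring
    linarith [hx'1, hcB, h7]
  have htan : (x' - a) / (1 + a) + Real.log (1 + a)
      = (x' - b) / (1 + b) + Real.log (1 + b) := by
    have h6 := hdiff x'
    rw [hx'1] at h6
    have : ((1 + a) * c - (1 + a) * c) * ((b - a) / ((1 + a) * (1 + b))) = 0 := by ring
    linarith [h6]
  have hgapx' : min ((x' - a) / (1 + a) + Real.log (1 + a))
      ((x' - b) / (1 + b) + Real.log (1 + b)) - Real.log (1 + x') = hyperErr a b := by
    rw [htan, min_self, hErr]
    have ea : (x' - b) / (1 + b) = (1 + a) * c / (1 + b) - 1 := by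
      rw [hx'def]; field_simp; ring
    have hlogx' : Real.log (1 + x') = Real.log (1 + a) + Real.log c := by
      rw [hx'1, Real.log_mul hA.ne' hc0.ne']
    linarith [ea, h3, hlogx', hlogdiff]
  refine ⟨hpt, ?_, x', ⟨hx'a, hx'b⟩, htan, hgapx'⟩
  have hmem : hyperErr a b ∈ (fun x : ℝ =>
      min ((x - a) / (1 + a) + Real.log (1 + a))
          ((x - b) / (1 + b) + Real.log (1 + b)) - Real.log (1 + x)) '' Set.Icc a b :=
    ⟨x', ⟨hx'a, hx'b⟩, hgapx'⟩
  apply le_antisymm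
  · apply csSup_le ⟨_, hmem⟩
    rintro y ⟨x, hx, rfl⟩
    exact (hpt x hx).2
  · apply le_csSup
    · exact ⟨hyperErr a b, by rintro y ⟨x, hx, rfl⟩; exact (hpt x hx).2⟩
    · exact hmem
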